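/- For the basis functions χ_i(x) = L_i(x) − L_{i+1}(x), the weighted stiffness matrix a_{ij} = ∫_{−1}^{1} χ_j'(x) χ_i'(x) (x+1) dx is diagonal with a_{ii} = 2i + 2. -/

import Mathlib

open Polynomial intervalIntegral

/-- The `n`-th Legendre polynomial via Rodrigues' formula. -/
noncomputable def legendre (n : ℕ) : Polynomial ℝ :=
  Polynomial.C ((2 ^ n * n.factorial : ℝ)⁻¹) * Polynomial.derivative^[n] ((X ^ 2 - 1) ^ n)

/-- χ_i = L_i − L_{i+1}. -/
noncomputable def chi (i : ℕ) : Polynomial ℝ := legendre i - legendre (i + 1)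

/-- a_{ij} = ∫_{-1}^1 χ_j' χ_i' (x+1) dx. -/
noncomputable def aMat (i j : ℕ) : ℝ :=
  ∫ x in (-1 : ℝ)..1,
    (Polynomial.derivative (chi j)).eval x * (Polynomial.derivative (chi i)).eval x * (x + 1)

noncomputable def VV (n : ℕ) : Polynomial ℝ := ((X : Polynomial ℝ) ^ 2 - 1) ^ n
noncomputable def PP (n : ℕ) : Polynomial ℝ := Polynomial.derivative^[n] (VV n)

lemma legendre_eq (n : ℕ) : legendre n = C ((2 ^ n * n.factorial : ℝ)⁻¹) * PP n := rfl

-- eval of iterated derivative of VV at ±1 vanishes below order n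
lemma ev_iter (m n : ℕ) (h : m < n) (y : ℝ) (hy : y ^ 2 = 1) :
    (Polynomial.derivative^[m] (VV n)).eval y = 0 := by
  obtain ⟨q, hq⟩ := Polynomial.pow_sub_dvd_iterate_derivative_pow ((X : Polynomial ℝ) ^ 2 - 1) n m
  rw [VV, hq, eval_mul, eval_pow, eval_sub, eval_pow, eval_one, eval_X, hy, sub_self,
    zero_pow (by omega), zero_mul]

-- iterated derivative of X * p
lemma iter_X_mul (m : ℕ) (p : Polynomial ℝ) :
    Polynomial.derivative^[m + 1] (X * p) =
      X * Polynomial.derivative^[m + 1] p + ((m : Polynomial ℝ) + 1) * Polynomial.derivative^[m] p := by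
  induction m generalizing p with
  | zero => simp [Polynomial.derivative_mul]; ring
  | succ k ih =>
    rw [Function.iterate_succ_apply, Polynomial.derivative_mul, derivative_X, one_mul]
    rw [show (Polynomial.derivative^[k + 1] (p + X * Polynomial.derivative p)) =
      Polynomial.derivative^[k+1] p + Polynomial.derivative^[k+1] (X * Polynomial.derivative p)
      by rw [iterate_map_add]]
    rw [ih (Polynomial.derivative p)]
    simp only [Function.iterate_succ_apply]
    push_cast
    ring

-- iterated derivative of (X^2-1) * p
lemma iter_q (k : ℕ) (p : Polynomial ℝ) :
    Polynomial.derivative^[k + 2] (((X : Polynomial ℝ) ^ 2 - 1) * p) =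
      ((X : Polynomial ℝ) ^ 2 - 1) * Polynomial.derivative^[k + 2] p
      + 2 * ((k : Polynomial ℝ) + 2) * X * Polynomial.derivative^[k + 1] p
      + ((k : Polynomial ℝ) + 2) * ((k : Polynomial ℝ) + 1) * Polynomial.derivative^[k] p := by
  have h : ((X : Polynomial ℝ) ^ 2 - 1) * p = X * (X * p) - p := by ring
  rw [h, iterate_map_sub, iter_X_mul (k + 1) (X * p), iter_X_mul (k + 1) p, iter_X_mul k p]
  push_cast
  ring

-- derivative of VV (n+1)
lemma deriv_VV (n : ℕ) :
    Polynomial.derivative (VV (n + 1)) = 2 * ((n : Polynomial ℝ) + 1) * (X * VV n) := by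
  rw [VV, VV, Polynomial.derivative_pow]
  simp [Polynomial.derivative_sub, Polynomial.derivative_one, Polynomial.derivative_X_pow,
    map_ofNat]
  push_cast
  ring

-- P recurrence for derivative : P_{n+1}' = 2(n+1)(X P_n' + (n+1) P_n)
lemma deriv_PP_succ (n : ℕ) :
    Polynomial.derivative (PP (n + 1)) =
      2 * ((n : Polynomial ℝ) + 1) *
        (X * Polynomial.derivative (PP n) + ((n : Polynomial ℝ) + 1) * PP n) := by
  have h1 : Polynomial.derivative (PP (n + 1)) =
      Polynomial.derivative^[n + 1] (Polynomial.derivative (VV (n + 1))) := by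
    rw [PP]
    exact ((Function.iterate_succ_apply' Polynomial.derivative (n+1) (VV (n+1))).symm).trans
      (Function.iterate_succ_apply Polynomial.derivative (n+1) (VV (n+1)))
  have hc : (2 : Polynomial ℝ) * ((n : Polynomial ℝ) + 1) * (X * VV n) =
      C (2 * ((n:ℝ) + 1)) * (X * VV n) := by
    push_cast [Polynomial.C_mul, Polynomial.C_add, Polynomial.C_1, map_ofNat,
      Polynomial.C_eq_natCast]
    ring
  rw [h1, deriv_VV, hc, Polynomial.iterate_derivative_C_mul, iter_X_mul n (VV n)]
  have h2 : Polynomial.derivative^[n + 1] (VV n) = Polynomial.derivative (PP n) := by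
    rw [PP, Function.iterate_succ_apply']
  rw [h2, PP]
  push_cast [Polynomial.C_mul, Polynomial.C_add, Polynomial.C_1, map_ofNat, Polynomial.C_eq_natCast]
  ring

lemma VV_succ (n : ℕ) : VV (n + 1) = ((X : Polynomial ℝ) ^ 2 - 1) * VV n := by
  rw [VV, VV, pow_succ]; ring

lemma iterDnext (j : ℕ) (w : Polynomial ℝ) :
    Polynomial.derivative^[j] (Polynomial.derivative w) = Polynomial.derivative^[j + 1] w :=
  (Function.iterate_succ_apply Polynomial.derivative j w).symm

lemma iterDnext' (j : ℕ) (w : Polynomial ℝ) :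
    Polynomial.derivative^[j + 1] w = Polynomial.derivative (Polynomial.derivative^[j] w) :=
  Function.iterate_succ_apply' Polynomial.derivative j w

-- the Legendre ODE packaged: (X²-1) P_{n+1}' = (n+1)(n+2) D^[n] V_{n+1}
lemma claim8 (n : ℕ) :
    ((X : Polynomial ℝ) ^ 2 - 1) * Polynomial.derivative (PP (n + 1)) =
      ((n : Polynomial ℝ) + 1) * ((n : Polynomial ℝ) + 2) *
        Polynomial.derivative^[n] (VV (n + 1)) := by
  have hb : ((X : Polynomial ℝ) ^ 2 - 1) * Polynomial.derivative (VV (n + 1)) =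
      C (2 * ((n : ℝ) + 1)) * (X * VV (n + 1)) := by
    rw [deriv_VV, VV_succ]
    push_cast [Polynomial.C_mul, Polynomial.C_add, Polynomial.C_1, map_ofNat,
      Polynomial.C_eq_natCast]
    ring
  have hD := congrArg (Polynomial.derivative^[n + 2]) hb
  rw [iter_q n (Polynomial.derivative (VV (n + 1))), Polynomial.iterate_derivative_C_mul,
    iter_X_mul (n + 1) (VV (n + 1))] at hD
  rw [iterDnext (n + 2) (VV (n + 1)), iterDnext (n + 1) (VV (n + 1)),
    iterDnext n (VV (n + 1))] at hD
  -- rename pieces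
  have e1 : Polynomial.derivative^[n + 1] (VV (n + 1)) = PP (n + 1) := rfl
  have e2 : Polynomial.derivative^[n + 2] (VV (n + 1)) = Polynomial.derivative (PP (n + 1)) := by
    rw [iterDnext' (n + 1), e1]
  have e3 : Polynomial.derivative^[n + 3] (VV (n + 1)) =
      Polynomial.derivative (Polynomial.derivative (PP (n + 1))) := by
    rw [iterDnext' (n + 2), e2]
  rw [e1, e2, e3] at hD
  -- hD : (X²-1) DDP + 2(n+2) X DP + (n+2)(n+1) P = C(2(n+1)) * (X*DP + (n+2)*P)
  set P := PP (n + 1) with hP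
  have ode : ((X : Polynomial ℝ) ^ 2 - 1) * Polynomial.derivative (Polynomial.derivative P)
      + 2 * X * Polynomial.derivative P
      = ((n : Polynomial ℝ) + 1) * ((n : Polynomial ℝ) + 2) * P := by
    have hc : (C (2 * ((n : ℝ) + 1)) : Polynomial ℝ) = 2 * ((n : Polynomial ℝ) + 1) := by
      push_cast [Polynomial.C_mul, Polynomial.C_add, Polynomial.C_1, map_ofNat,
        Polynomial.C_eq_natCast]
      ring
    rw [hc] at hD
    push_cast at hD
    linear_combination hD
  set G := ((X : Polynomial ℝ) ^ 2 - 1) * Polynomial.derivative P -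
      ((n : Polynomial ℝ) + 1) * ((n : Polynomial ℝ) + 2) *
        Polynomial.derivative^[n] (VV (n + 1)) with hG
  have hdG : Polynomial.derivative G = 0 := by
    rw [hG]
    rw [Polynomial.derivative_sub, Polynomial.derivative_mul, Polynomial.derivative_mul]
    have : Polynomial.derivative (Polynomial.derivative^[n] (VV (n + 1))) = P := by
      rw [← iterDnext' n, e1]
    rw [this]
    have hcn : Polynomial.derivative (((n : Polynomial ℝ) + 1) * ((n : Polynomial ℝ) + 2)) = 0 := by
      simp
    rw [hcn]
    have hx2 : Polynomial.derivative ((X : Polynomial ℝ) ^ 2 - 1) = 2 * X := by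
      simp [Polynomial.derivative_X_pow, map_ofNat]
      exact one_add_one_eq_two
    rw [hx2]
    linear_combination ode
  have hGC : G = C (G.coeff 0) := Polynomial.eq_C_of_derivative_eq_zero hdG
  have hGev : G.eval 1 = 0 := by
    rw [hG]
    simp only [Polynomial.eval_sub, Polynomial.eval_mul, Polynomial.eval_pow, Polynomial.eval_X,
      Polynomial.eval_one, Polynomial.eval_add, Polynomial.eval_natCast, Polynomial.eval_ofNat]
    rw [ev_iter n (n + 1) (by omega) 1 (by norm_num)]
    norm_num
  have hG0 : G = 0 := by
    rw [hGC] at hGev ⊢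
    rw [Polynomial.eval_C] at hGev
    rw [hGev, map_zero]
  have := sub_eq_zero.mp hG0
  linear_combination this

lemma PP_succ (m : ℕ) :
    PP (m + 2) = C (2 * ((m : ℝ) + 2)) *
      (X * PP (m + 1)
        + ((m : Polynomial ℝ) + 1) * Polynomial.derivative^[m] (VV (m + 1))) := by
  have h0 : PP (m + 2) = Polynomial.derivative^[m + 1] (Polynomial.derivative (VV (m + 2))) := by
    rw [PP, Function.iterate_succ_apply]
  have hdv : Polynomial.derivative (VV (m + 2)) = C (2 * ((m : ℝ) + 2)) * (X * VV (m + 1)) := by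
    rw [deriv_VV (m + 1)]
    push_cast [Polynomial.C_mul, Polynomial.C_add, Polynomial.C_1, map_ofNat,
      Polynomial.C_eq_natCast]
    ring
  rw [h0, hdv, Polynomial.iterate_derivative_C_mul, iter_X_mul m (VV (m + 1))]
  rfl

lemma hC_cast (a : ℝ) : (C a : Polynomial ℝ) = C a := rfl

lemma C_two_mul (n : ℕ) :
    (C (2 * ((n : ℝ) + 1)) : Polynomial ℝ) = 2 * ((n : Polynomial ℝ) + 1) := by
  push_cast [Polynomial.C_mul, Polynomial.C_add, Polynomial.C_1, map_ofNat,
    Polynomial.C_eq_natCast]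
  ring

lemma cc_rel (n : ℕ) :
    ((2 : ℝ) ^ n * n.factorial)⁻¹ =
      ((2 : ℝ) ^ (n + 1) * (n + 1).factorial)⁻¹ * (2 * ((n : ℝ) + 1)) := by
  have h1 : (2 : ℝ) ^ n ≠ 0 := by positivity
  have h2 : ((n.factorial : ℝ)) ≠ 0 := Nat.cast_ne_zero.mpr n.factorial_ne_zero
  rw [pow_succ, Nat.factorial_succ]
  push_cast
  field_simp

-- identity A
lemma idA (n : ℕ) :
    Polynomial.derivative (legendre (n + 1)) =
      X * Polynomial.derivative (legendre n) + ((n : Polynomial ℝ) + 1) * legendre n := by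
  have hd : Polynomial.derivative (legendre (n + 1)) =
      C ((2 ^ (n+1) * (n+1).factorial : ℝ)⁻¹) * Polynomial.derivative (PP (n + 1)) := by
    rw [legendre_eq, Polynomial.derivative_C_mul]
  have hd2 : Polynomial.derivative (legendre n) =
      C ((2 ^ n * n.factorial : ℝ)⁻¹) * Polynomial.derivative (PP n) := by
    rw [legendre_eq, Polynomial.derivative_C_mul]
  rw [hd, hd2, deriv_PP_succ, legendre_eq]
  rw [show (C ((2 ^ n * n.factorial : ℝ)⁻¹) : Polynomial ℝ)
      = C ((2 ^ (n+1) * (n+1).factorial : ℝ)⁻¹) * (2 * ((n : Polynomial ℝ) + 1)) by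
    rw [← C_two_mul, ← Polynomial.C_mul, ← cc_rel]]
  ring

lemma legendre_zero : legendre 0 = 1 := by
  simp [legendre]

lemma legendre_one : legendre 1 = X := by
  have : legendre 1 = C ((2:ℝ)⁻¹) * (2 * X) := by
    simp [legendre, Polynomial.derivative_sub, Polynomial.derivative_one,
      Polynomial.derivative_X_pow, map_ofNat]
    exact one_add_one_eq_two
  rw [this, show (C ((2:ℝ)⁻¹) : Polynomial ℝ) * (2 * X) = (C ((2:ℝ)⁻¹) * C 2) * X by
    rw [map_ofNat]; ring, ← Polynomial.C_mul]
  norm_num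

-- identity B
lemma idB (n : ℕ) :
    (1 - (X : Polynomial ℝ) ^ 2) * Polynomial.derivative (legendre n) =
      ((n : Polynomial ℝ) + 1) * (X * legendre n - legendre (n + 1)) := by
  cases n with
  | zero => simp [legendre_zero, legendre_one]
  | succ m =>
    have h8 := claim8 m
    have hE := PP_succ m
    have hd : Polynomial.derivative (legendre (m + 1)) =
        C ((2 ^ (m+1) * (m+1).factorial : ℝ)⁻¹) * Polynomial.derivative (PP (m + 1)) := by
      rw [legendre_eq, Polynomial.derivative_C_mul]
    rw [hd, legendre_eq (m + 1), legendre_eq (m + 2)]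
    rw [show (C ((2 ^ (m+1) * (m+1).factorial : ℝ)⁻¹) : Polynomial ℝ)
        = C ((2 ^ (m+2) * (m+2).factorial : ℝ)⁻¹) * (2 * (((m+1) : Polynomial ℝ) + 1)) by
      rw [show (((m+1) : Polynomial ℝ) + 1) = (((m+1 : ℕ) : Polynomial ℝ) + 1) by push_cast; ring,
        ← C_two_mul (m+1), ← Polynomial.C_mul, ← cc_rel (m+1)]]
    rw [hE, show (C (2*((m:ℝ)+2)) : Polynomial ℝ) = 2*((m:Polynomial ℝ)+2) by
      push_cast [Polynomial.C_mul, Polynomial.C_add, Polynomial.C_1, map_ofNat,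
        Polynomial.C_eq_natCast]; ring]
    push_cast at h8 ⊢
    linear_combination (-(C ((2 ^ (m+2) * (m+2).factorial : ℝ)⁻¹)) * (2 * ((m:Polynomial ℝ) + 2))) * h8

lemma legendre_eval_one (n : ℕ) : (legendre n).eval 1 = 1 := by
  induction n with
  | zero => simp [legendre_zero]
  | succ m ih =>
    have h := congrArg (Polynomial.eval (1 : ℝ)) (idB m)
    simp only [Polynomial.eval_mul, Polynomial.eval_sub, Polynomial.eval_add, Polynomial.eval_one,
      Polynomial.eval_pow, Polynomial.eval_X, Polynomial.eval_natCast] at h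
    have hm : ((m : ℝ) + 1) ≠ 0 := by positivity
    have := h
    rw [ih] at this
    norm_num at this
    rcases this with h1 | h2
    · exact absurd h1 hm
    · linarith

lemma legendre_eval_negone (n : ℕ) : (legendre n).eval (-1) = (-1) ^ n := by
  induction n with
  | zero => simp [legendre_zero]
  | succ m ih =>
    have h := congrArg (Polynomial.eval (-1 : ℝ)) (idB m)
    simp only [Polynomial.eval_mul, Polynomial.eval_sub, Polynomial.eval_add, Polynomial.eval_one,
      Polynomial.eval_pow, Polynomial.eval_X, Polynomial.eval_natCast] at h
    have hm : ((m : ℝ) + 1) ≠ 0 := by positivity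
    rw [ih] at h
    norm_num at h
    rcases h with h1 | h2
    · exact absurd h1 hm
    · rw [pow_succ]; linarith

-- the key identity: (X+1) χ_i' = -(i+1)(L_i + L_{i+1})
lemma idE (i : ℕ) :
    ((X : Polynomial ℝ) + 1) * Polynomial.derivative (chi i) =
      -(((i : Polynomial ℝ) + 1)) * (legendre i + legendre (i + 1)) := by
  rw [chi, Polynomial.derivative_sub]
  linear_combination (-((X : Polynomial ℝ)+1)) * idA i + idB i

lemma ii (p q : Polynomial ℝ) :
    IntervalIntegrable (fun x => p.eval x * q.eval x) MeasureTheory.volume (-1 : ℝ) 1 :=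
  (p.continuous.mul q.continuous).intervalIntegrable _ _

lemma intD (p : Polynomial ℝ) :
    ∫ x in (-1:ℝ)..1, (Polynomial.derivative p).eval x = p.eval 1 - p.eval (-1) := by
  apply intervalIntegral.integral_deriv_eq_sub' (fun x => p.eval x)
  · funext x
    exact p.deriv
  · intro x _
    exact p.differentiable.differentiableAt
  · exact (Polynomial.derivative p).continuous.continuousOn

lemma ibp (p q : Polynomial ℝ) :
    ∫ x in (-1:ℝ)..1, (Polynomial.derivative p).eval x * q.eval x =
      p.eval 1 * q.eval 1 - p.eval (-1) * q.eval (-1) -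
        ∫ x in (-1:ℝ)..1, p.eval x * (Polynomial.derivative q).eval x := by
  have h := intD (p * q)
  rw [Polynomial.derivative_mul] at h
  have hsplit : (∫ x in (-1:ℝ)..1,
      (Polynomial.derivative p * q + p * Polynomial.derivative q).eval x) =
      (∫ x in (-1:ℝ)..1, (Polynomial.derivative p).eval x * q.eval x) +
      ∫ x in (-1:ℝ)..1, p.eval x * (Polynomial.derivative q).eval x := by
    simp only [Polynomial.eval_add, Polynomial.eval_mul]
    exact intervalIntegral.integral_add (ii _ _) (ii _ _)
  rw [hsplit] at h
  simp only [Polynomial.eval_mul] at h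
  linarith

lemma orth_aux (n : ℕ) (q : Polynomial ℝ) :
    ∀ k, k ≤ n → (∫ x in (-1:ℝ)..1, (PP n).eval x * q.eval x) =
      (-1:ℝ)^k * ∫ x in (-1:ℝ)..1,
        (Polynomial.derivative^[n - k] (VV n)).eval x * (Polynomial.derivative^[k] q).eval x := by
  intro k
  induction k with
  | zero => intro _; simp [PP]
  | succ k ih =>
    intro hk
    rw [ih (by omega)]
    have h1 : n - k = (n - (k + 1)) + 1 := by omega
    have h2 : Polynomial.derivative^[n - k] (VV n) =
        Polynomial.derivative (Polynomial.derivative^[n - (k + 1)] (VV n)) := by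
      rw [h1, iterDnext']
    rw [h2, ibp (Polynomial.derivative^[n - (k+1)] (VV n)) (Polynomial.derivative^[k] q)]
    rw [ev_iter (n - (k+1)) n (by omega) 1 (by norm_num),
      ev_iter (n - (k+1)) n (by omega) (-1) (by norm_num)]
    rw [← iterDnext k q, iterDnext k q, Function.iterate_succ_apply']
    ring

lemma orth (n : ℕ) (q : Polynomial ℝ) (h : Polynomial.derivative^[n] q = 0) :
    (∫ x in (-1:ℝ)..1, (legendre n).eval x * q.eval x) = 0 := by
  have := orth_aux n q n le_rfl
  rw [h] at this
  simp only [Polynomial.eval_zero, mul_zero, intervalIntegral.integral_zero] at this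
  rw [legendre_eq]
  simp only [Polynomial.eval_mul, Polynomial.eval_C, mul_assoc]
  rw [intervalIntegral.integral_const_mul]
  simp only [← Polynomial.eval_mul] at this ⊢
  rw [this, mul_zero]

lemma natDeg_legendre (n : ℕ) : (legendre n).natDegree ≤ n := by
  rw [legendre_eq]
  refine (Polynomial.natDegree_C_mul_le _ _).trans ?_
  refine (Polynomial.natDegree_iterate_derivative _ _).trans ?_
  have hV : (VV n).natDegree ≤ 2 * n := by
    refine (Polynomial.natDegree_pow_le).trans ?_
    have h2 : ((X : Polynomial ℝ) ^ 2 - 1).natDegree ≤ 2 := by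
      refine (Polynomial.natDegree_sub_le _ _).trans ?_
      simp [Polynomial.natDegree_X_pow]
    calc n * ((X : Polynomial ℝ) ^ 2 - 1).natDegree ≤ n * 2 := Nat.mul_le_mul_left n h2
      _ = 2 * n := by ring
  omega

lemma orth' (n : ℕ) (q : Polynomial ℝ) (h : q.natDegree < n) :
    (∫ x in (-1:ℝ)..1, (legendre n).eval x * q.eval x) = 0 :=
  orth n q (Polynomial.iterate_derivative_eq_zero h)

lemma int_dL_L (n : ℕ) :
    (∫ x in (-1:ℝ)..1, (Polynomial.derivative (legendre n)).eval x * (legendre n).eval x) = 0 := by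
  have h := ibp (legendre n) (legendre n)
  rw [legendre_eval_one, legendre_eval_negone] at h
  have : (∫ x in (-1:ℝ)..1, (legendre n).eval x * (Polynomial.derivative (legendre n)).eval x)
      = ∫ x in (-1:ℝ)..1, (Polynomial.derivative (legendre n)).eval x * (legendre n).eval x := by
    congr 1; funext x; ring
  rw [this] at h
  have hsq : ((-1:ℝ)^n) * ((-1:ℝ)^n) = 1 := by
    rw [← pow_add]; exact Even.neg_one_pow ⟨n, rfl⟩
  rw [hsq] at h  -- may not match; fix below
  linarith

lemma natDeg_dL_lt (n : ℕ) : (Polynomial.derivative (legendre n)).natDegree < n + 1 := by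
  have h1 := Polynomial.natDegree_derivative_le (legendre n)
  have h2 := natDeg_legendre n
  omega

lemma int_dLsucc_L (n : ℕ) :
    (∫ x in (-1:ℝ)..1,
      (Polynomial.derivative (legendre (n+1))).eval x * (legendre n).eval x) = 2 := by
  have h := ibp (legendre (n+1)) (legendre n)
  rw [legendre_eval_one, legendre_eval_one, legendre_eval_negone, legendre_eval_negone] at h
  have h0 : (∫ x in (-1:ℝ)..1,
      (legendre (n+1)).eval x * (Polynomial.derivative (legendre n)).eval x) = 0 :=
    orth' (n+1) _ (natDeg_dL_lt n)
  rw [h0] at h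
  rw [h]
  rw [pow_succ]
  have hsq : ((-1:ℝ)^n) * ((-1:ℝ)^n) = 1 := by
    rw [← pow_add]; exact Even.neg_one_pow ⟨n, rfl⟩
  nlinarith [hsq]

-- derivative of chi has small degree
lemma natDeg_dchi (j : ℕ) : (Polynomial.derivative (chi j)).natDegree ≤ j := by
  have h1 : (chi j).natDegree ≤ j + 1 := by
    rw [chi]
    refine (Polynomial.natDegree_sub_le _ _).trans ?_
    have := natDeg_legendre j
    have := natDeg_legendre (j+1)
    omega
  have h2 := Polynomial.natDegree_derivative_le (chi j)
  omega

lemma ii' (p q r : Polynomial ℝ) :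
    IntervalIntegrable (fun x => p.eval x * q.eval x + p.eval x * r.eval x)
      MeasureTheory.volume (-1 : ℝ) 1 :=
  ((p.continuous.mul q.continuous).add (p.continuous.mul r.continuous)).intervalIntegrable _ _

lemma aMat_eq (i j : ℕ) :
    aMat i j = -((i : ℝ) + 1) *
      ((∫ x in (-1:ℝ)..1, (Polynomial.derivative (chi j)).eval x * (legendre i).eval x)
        + ∫ x in (-1:ℝ)..1, (Polynomial.derivative (chi j)).eval x * (legendre (i+1)).eval x) := by
  have hx : ∀ x : ℝ, (Polynomial.derivative (chi i)).eval x * (x + 1) =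
      -((i:ℝ)+1) * ((legendre i).eval x + (legendre (i+1)).eval x) := by
    intro x
    have h := congrArg (Polynomial.eval x) (idE i)
    simp only [Polynomial.eval_mul, Polynomial.eval_add, Polynomial.eval_neg, Polynomial.eval_X,
      Polynomial.eval_one, Polynomial.eval_natCast] at h
    linarith
  have hfun : (fun x : ℝ => (Polynomial.derivative (chi j)).eval x *
        (Polynomial.derivative (chi i)).eval x * (x + 1)) =
      fun x : ℝ => -((i:ℝ)+1) * ((Polynomial.derivative (chi j)).eval x * (legendre i).eval x
        + (Polynomial.derivative (chi j)).eval x * (legendre (i+1)).eval x) := by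
    funext x
    rw [mul_assoc, hx x]
    ring
  rw [aMat, hfun, intervalIntegral.integral_const_mul,
    intervalIntegral.integral_add (ii _ _) (ii _ _)]

lemma int_dchi_L_self (i : ℕ) :
    (∫ x in (-1:ℝ)..1, (Polynomial.derivative (chi i)).eval x * (legendre i).eval x) = -2 := by
  have hsub : (fun x : ℝ => (Polynomial.derivative (chi i)).eval x * (legendre i).eval x) =
      fun x : ℝ => (Polynomial.derivative (legendre i)).eval x * (legendre i).eval x
        - (Polynomial.derivative (legendre (i+1))).eval x * (legendre i).eval x := by
    funext x
    rw [chi, Polynomial.derivative_sub, Polynomial.eval_sub]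
    ring
  rw [hsub, intervalIntegral.integral_sub (ii _ _) (ii _ _), int_dL_L, int_dLsucc_L]
  norm_num

lemma int_comm (p q : Polynomial ℝ) :
    (∫ x in (-1:ℝ)..1, p.eval x * q.eval x) = ∫ x in (-1:ℝ)..1, q.eval x * p.eval x := by
  congr 1; funext x; ring

lemma int_dchi_L_succ (i : ℕ) :
    (∫ x in (-1:ℝ)..1, (Polynomial.derivative (chi i)).eval x * (legendre (i+1)).eval x) = 0 := by
  have hsub : (fun x : ℝ => (Polynomial.derivative (chi i)).eval x * (legendre (i+1)).eval x) =
      fun x : ℝ => (Polynomial.derivative (legendre i)).eval x * (legendre (i+1)).eval x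
        - (Polynomial.derivative (legendre (i+1))).eval x * (legendre (i+1)).eval x := by
    funext x
    rw [chi, Polynomial.derivative_sub, Polynomial.eval_sub]
    ring
  rw [hsub, intervalIntegral.integral_sub (ii _ _) (ii _ _), int_dL_L]
  rw [int_comm, orth' (i+1) _ (natDeg_dL_lt i)]
  norm_num

lemma aMat_diag (i : ℕ) : aMat i i = 2 * (i : ℝ) + 2 := by
  rw [aMat_eq, int_dchi_L_self, int_dchi_L_succ]
  ring

lemma aMat_off (i j : ℕ) (h : j < i) : aMat i j = 0 := by
  rw [aMat_eq]
  rw [int_comm, orth' i _ (lt_of_le_of_lt (natDeg_dchi j) h)]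
  rw [int_comm, orth' (i+1) _ (lt_of_le_of_lt (natDeg_dchi j) (by omega))]
  ring

lemma aMat_symm (i j : ℕ) : aMat i j = aMat j i := by
  rw [aMat, aMat]
  congr 1; funext x; ring

theorem stiffness_diagonal (i j : ℕ) :
    aMat i i = 2 * (i : ℝ) + 2 ∧ (i ≠ j → aMat i j = 0) := by
  refine ⟨aMat_diag i, fun hij => ?_⟩
  rcases lt_or_gt_of_ne hij with h | h
  · rw [aMat_symm]; exact aMat_off j i h
  · exact aMat_off i j h
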